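/- Suppose n = 2, i.e., the prior is supported on two values 0 < v₁ < v₂. Then there exists a signaling scheme Z that is 1-majorized (exactly majorized): for every signaling scheme Z' and every m ∈ (0,1], PF(s_Z, m) ≥ PF(s_{Z'}, m). -/

import Mathlib

open Finset MeasureTheory

namespace PD

noncomputable section

/-- Complementary CDF of a mass function `fS` at value `v i`. -/
def G {n : ℕ} (v fS : Fin n → ℝ) (i : Fin n) : ℝ :=
  ∑ j ∈ Finset.univ.filter (fun j => v i ≤ v j), fS j

/-- A signal is a probability mass function on the values. -/
def IsSignal {n : ℕ} (fS : Fin n → ℝ) : Prop :=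
  (∀ i, 0 ≤ fS i) ∧ ∑ i, fS i = 1

/-- The index of the seller's price: the smallest index maximizing `v i * G i`. -/
def priceIdx {n : ℕ} [NeZero n] (v fS : Fin n → ℝ) : Fin n :=
  (Finset.univ.filter (fun i => ∀ j, v j * G v fS j ≤ v i * G v fS i)).min' (by
    haveI : Nonempty (Fin n) := ⟨⟨0, Nat.pos_of_ne_zero (NeZero.ne n)⟩⟩
    obtain ⟨b, _, hb⟩ := Finset.exists_max_image (Finset.univ : Finset (Fin n))
      (fun i => v i * G v fS i) Finset.univ_nonempty
    exact ⟨b, Finset.mem_filter.mpr ⟨Finset.mem_univ _, fun j => hb j (Finset.mem_univ _)⟩⟩)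

/-- Consumer surplus of value `v i` under signal `fS`. -/
def cs {n : ℕ} [NeZero n] (v fS : Fin n → ℝ) (i : Fin n) : ℝ :=
  if v (priceIdx v fS) ≤ v i then v i - v (priceIdx v fS) else 0

/-- Revenue of a signal: the maximum of `v i * G i`. -/
def revSig {n : ℕ} [NeZero n] (v fS : Fin n → ℝ) : ℝ :=
  Finset.univ.sup' (by
    haveI : Nonempty (Fin n) := ⟨⟨0, Nat.pos_of_ne_zero (NeZero.ne n)⟩⟩
    exact Finset.univ_nonempty) (fun i => v i * G v fS i)

/-- A signaling scheme for prior mass function `f`. -/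
structure Scheme (n : ℕ) (f : Fin n → ℝ) where
  Q : ℕ
  sig : Fin Q → Fin n → ℝ
  wt : Fin Q → ℝ
  sig_isSignal : ∀ q, IsSignal (sig q)
  wt_nonneg : ∀ q, 0 ≤ wt q
  wt_sum : ∑ q, wt q = 1
  bayes : ∀ i, ∑ q, wt q * sig q i = f i

/-- Expected consumer surplus of value `v i` under scheme `Z`. -/
def csZ {n : ℕ} [NeZero n] (v f : Fin n → ℝ) (Z : Scheme n f) (i : Fin n) : ℝ :=
  ∑ q, cs v (Z.sig q) i * (Z.wt q * Z.sig q i / f i)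

/-- Expected revenue of a scheme. -/
def revZ {n : ℕ} [NeZero n] (v : Fin n → ℝ) {f : Fin n → ℝ} (Z : Scheme n f) : ℝ :=
  ∑ q, Z.wt q * revSig v (Z.sig q)

/-- A scheme is efficient if on every positive-weight signal, the smallest value
in the support maximizes `v * G`. -/
def Efficient {n : ℕ} (v : Fin n → ℝ) {f : Fin n → ℝ} (Z : Scheme n f) : Prop :=
  ∀ q, 0 < Z.wt q → ∀ i, (0 < Z.sig q i ∧ ∀ j, 0 < Z.sig q j → i ≤ j) →
    ∀ j, v j * G v (Z.sig q) j ≤ v i * G v (Z.sig q) i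

/-- A scheme is monotone if higher values get (weakly) higher expected surplus. -/
def MonotoneScheme {n : ℕ} [NeZero n] (v f : Fin n → ℝ) (Z : Scheme n f) : Prop :=
  ∀ i j : Fin n, v i < v j → csZ v f Z i ≤ csZ v f Z j

/-- A scheme is buyer-optimal if the total expected consumer surplus equals the
expected value minus the Myerson revenue. -/
def BuyerOptimal {n : ℕ} [NeZero n] (v f : Fin n → ℝ) (Z : Scheme n f) : Prop :=
  ∑ i, f i * csZ v f Z i = (∑ i, f i * v i) - revSig v f

/-- The surplus-mass step function of a scheme: equal to `csZ i` on the quantile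
interval `(F(v_{i-1}), F(v_i)]`. -/
def smf {n : ℕ} [NeZero n] (v f : Fin n → ℝ) (Z : Scheme n f) (x : ℝ) : ℝ :=
  ∑ i, if (∑ j ∈ Finset.univ.filter (fun j => j < i), f j) < x ∧
          x ≤ ∑ j ∈ Finset.univ.filter (fun j => j ≤ i), f j
       then csZ v f Z i else 0

/-- Sorted `m`-prefix sum of `g` on `(0,1]`: the infimum of `∫_T g` over
(measurable) subsets `T` of `(0,1]` of total length `m`. -/
def PF (g : ℝ → ℝ) (m : ℝ) : ℝ :=
  sInf { r : ℝ | ∃ T : Set ℝ, T ⊆ Set.Ioc 0 1 ∧ MeasurableSet T ∧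
    volume T = ENNReal.ofReal m ∧ r = ∫ x in T, g x }

/-- Integration `m`-prefix sum of `g`: `∫₀^m g`. -/
def PFV (g : ℝ → ℝ) (m : ℝ) : ℝ := ∫ x in Set.Ioc (0:ℝ) m, g x

/-- A singleton signal puts all mass on one value. -/
def IsSingleton {n : ℕ} (fS : Fin n → ℝ) : Prop :=
  ∃ i : Fin n, fS = fun j => if j = i then 1 else 0

/-- An equal-revenue binary signal on `v i < v j` puts mass `1 - v i / v j` on
`v i` and `v i / v j` on `v j`. -/
def IsEqRevBinary {n : ℕ} (v : Fin n → ℝ) (fS : Fin n → ℝ) : Prop :=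
  ∃ i j : Fin n, v i < v j ∧
    fS = fun l => if l = i then 1 - v i / v j else if l = j then v i / v j else 0

/-- `i` is the smallest value in the support of `fS`. -/
def MinSupp {n : ℕ} (fS : Fin n → ℝ) (i : Fin n) : Prop :=
  0 < fS i ∧ ∀ j, 0 < fS j → i ≤ j

end


section Aux

variable (v : Fin 2 → ℝ)

lemma fin2_cases (p : Fin 2) : p = 0 ∨ p = 1 := by revert p; decide

lemma G_zero (hv : StrictMono v) (fS : Fin 2 → ℝ) : G v fS 0 = fS 0 + fS 1 := by
  unfold G
  rw [Finset.sum_filter, Fin.sum_univ_two]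
  rw [if_pos le_rfl, if_pos (hv (show (0:Fin 2) < 1 by decide)).le]

lemma G_one (hv : StrictMono v) (fS : Fin 2 → ℝ) : G v fS 1 = fS 1 := by
  unfold G
  rw [Finset.sum_filter, Fin.sum_univ_two]
  rw [if_neg (not_le.mpr (hv (show (0:Fin 2) < 1 by decide))), if_pos le_rfl, zero_add]

lemma priceIdx_max (fS : Fin 2 → ℝ) (j : Fin 2) :
    v j * G v fS j ≤ v (priceIdx v fS) * G v fS (priceIdx v fS) := by
  have h : priceIdx v fS ∈ Finset.univ.filter
      (fun i => ∀ j, v j * G v fS j ≤ v i * G v fS i) := by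
    unfold priceIdx; exact Finset.min'_mem _ _
  exact (Finset.mem_filter.mp h).2 j

lemma priceIdx_eq_zero (fS : Fin 2 → ℝ)
    (h0 : ∀ j, v j * G v fS j ≤ v 0 * G v fS 0) : priceIdx v fS = 0 := by
  have hm : (0 : Fin 2) ∈ Finset.univ.filter
      (fun i => ∀ j, v j * G v fS j ≤ v i * G v fS i) :=
    Finset.mem_filter.mpr ⟨Finset.mem_univ _, h0⟩
  have hle : priceIdx v fS ≤ 0 := by
    unfold priceIdx; exact Finset.min'_le _ 0 hm
  exact le_antisymm hle (Fin.zero_le _)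

lemma priceIdx_eq_one (fS : Fin 2 → ℝ)
    (h : ¬ v 1 * G v fS 1 ≤ v 0 * G v fS 0) : priceIdx v fS = 1 := by
  rcases fin2_cases (priceIdx v fS) with h0 | h1
  · exfalso
    have hm := priceIdx_max v fS 1
    rw [h0] at hm
    exact h hm
  · exact h1

lemma cs_zero (hv : StrictMono v) (fS : Fin 2 → ℝ) : cs v fS 0 = 0 := by
  unfold cs
  split
  · rename_i h
    have h2 : v 0 ≤ v (priceIdx v fS) := hv.monotone (Fin.zero_le _)
    linarith
  · rfl

lemma cs_one (hv : StrictMono v) (fS : Fin 2 → ℝ) :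
    cs v fS 1 = v 1 - v (priceIdx v fS) := by
  unfold cs
  rcases fin2_cases (priceIdx v fS) with h | h <;> rw [h]
  · rw [if_pos (hv (show (0:Fin 2) < 1 by decide)).le]
  · rw [if_pos le_rfl]

lemma cs_nonneg (fS : Fin 2 → ℝ) (i : Fin 2) : 0 ≤ cs v fS i := by
  unfold cs
  split
  · rename_i h; linarith
  · exact le_rfl

lemma rev_ge_v0 (hv : StrictMono v) (fS : Fin 2 → ℝ) (hS : IsSignal fS) :
    v 0 ≤ v (priceIdx v fS) * G v fS (priceIdx v fS) := by
  have h := priceIdx_max v fS 0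
  rw [G_zero v hv fS] at h
  have hs : fS 0 + fS 1 = 1 := by rw [← Fin.sum_univ_two fS]; exact hS.2
  rw [hs, mul_one] at h
  exact h

lemma rev_ge_v1 (hv : StrictMono v) (fS : Fin 2 → ℝ) :
    v 1 * fS 1 ≤ v (priceIdx v fS) * G v fS (priceIdx v fS) := by
  have h := priceIdx_max v fS 1
  rw [G_one v hv fS] at h
  exact h

lemma signal_surplus_le (hv : StrictMono v) (hvpos : ∀ i, 0 < v i)
    (fS : Fin 2 → ℝ) (hS : IsSignal fS) :
    (v 1 - v (priceIdx v fS)) * fS 1 ≤ fS 0 * v 0 + fS 1 * v 1 -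
      v (priceIdx v fS) * G v fS (priceIdx v fS) := by
  rcases fin2_cases (priceIdx v fS) with h | h <;> rw [h]
  · rw [G_zero v hv fS]
    exact le_of_eq (by ring)
  · rw [G_one v hv fS]
    nlinarith [mul_nonneg (hS.1 0) (hvpos 0).le]

lemma csZ_zero (f : Fin 2 → ℝ) (hv : StrictMono v) (Z : Scheme 2 f) :
    csZ v f Z 0 = 0 := by
  unfold csZ
  apply Finset.sum_eq_zero
  intro q _
  rw [cs_zero v hv, zero_mul]

lemma csZ_nonneg (f : Fin 2 → ℝ) (hf : ∀ i, 0 < f i) (Z : Scheme 2 f) (i : Fin 2) :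
    0 ≤ csZ v f Z i := by
  unfold csZ
  apply Finset.sum_nonneg
  intro q _
  apply mul_nonneg (cs_nonneg v _ i)
  exact div_nonneg (mul_nonneg (Z.wt_nonneg q) ((Z.sig_isSignal q).1 i)) (hf i).le

lemma csZ_one_le (f : Fin 2 → ℝ) (hv : StrictMono v) (hvpos : ∀ i, 0 < v i)
    (hf : ∀ i, 0 < f i) (Z : Scheme 2 f) :
    csZ v f Z 1 * f 1 ≤ f 0 * v 0 + f 1 * v 1 - max (v 0) (v 1 * f 1) := by
  have hf1 : f 1 ≠ 0 := (hf 1).ne'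
  have key : csZ v f Z 1 * f 1
      = ∑ q, (v 1 - v (priceIdx v (Z.sig q))) * (Z.wt q * Z.sig q 1) := by
    unfold csZ
    rw [Finset.sum_mul]
    apply Finset.sum_congr rfl
    intro q _
    rw [cs_one v hv]
    field_simp
  have step1 : ∑ q, (v 1 - v (priceIdx v (Z.sig q))) * (Z.wt q * Z.sig q 1)
      ≤ ∑ q, Z.wt q * (Z.sig q 0 * v 0 + Z.sig q 1 * v 1 -
          v (priceIdx v (Z.sig q)) * G v (Z.sig q) (priceIdx v (Z.sig q))) := by
    apply Finset.sum_le_sum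
    intro q _
    have h1 := signal_surplus_le v hv hvpos (Z.sig q) (Z.sig_isSignal q)
    have h2 := mul_le_mul_of_nonneg_left h1 (Z.wt_nonneg q)
    calc (v 1 - v (priceIdx v (Z.sig q))) * (Z.wt q * Z.sig q 1)
        = Z.wt q * ((v 1 - v (priceIdx v (Z.sig q))) * Z.sig q 1) := by ring
      _ ≤ _ := h2
  have e0 : ∑ q, Z.wt q * (Z.sig q 0 * v 0) = f 0 * v 0 := by
    rw [← Z.bayes 0, Finset.sum_mul]
    apply Finset.sum_congr rfl
    intro q _; ring
  have e1 : ∑ q, Z.wt q * (Z.sig q 1 * v 1) = f 1 * v 1 := by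
    rw [← Z.bayes 1, Finset.sum_mul]
    apply Finset.sum_congr rfl
    intro q _; ring
  have step2 : ∑ q, Z.wt q * (Z.sig q 0 * v 0 + Z.sig q 1 * v 1 -
          v (priceIdx v (Z.sig q)) * G v (Z.sig q) (priceIdx v (Z.sig q)))
      = f 0 * v 0 + f 1 * v 1 - ∑ q, Z.wt q *
          (v (priceIdx v (Z.sig q)) * G v (Z.sig q) (priceIdx v (Z.sig q))) := by
    rw [← e0, ← e1, ← Finset.sum_add_distrib, ← Finset.sum_sub_distrib]
    apply Finset.sum_congr rfl
    intro q _; ring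
  have step3 : v 0 ≤ ∑ q, Z.wt q *
      (v (priceIdx v (Z.sig q)) * G v (Z.sig q) (priceIdx v (Z.sig q))) := by
    calc v 0 = ∑ q, Z.wt q * v 0 := by rw [← Finset.sum_mul, Z.wt_sum, one_mul]
      _ ≤ _ := by
        apply Finset.sum_le_sum
        intro q _
        exact mul_le_mul_of_nonneg_left
          (rev_ge_v0 v hv (Z.sig q) (Z.sig_isSignal q)) (Z.wt_nonneg q)
  have step4 : v 1 * f 1 ≤ ∑ q, Z.wt q *
      (v (priceIdx v (Z.sig q)) * G v (Z.sig q) (priceIdx v (Z.sig q))) := by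
    have e2 : v 1 * f 1 = ∑ q, Z.wt q * (v 1 * Z.sig q 1) := by
      rw [← Z.bayes 1, Finset.mul_sum]
      apply Finset.sum_congr rfl
      intro q _; ring
    rw [e2]
    apply Finset.sum_le_sum
    intro q _
    exact mul_le_mul_of_nonneg_left (rev_ge_v1 v hv (Z.sig q)) (Z.wt_nonneg q)
  have hmax : max (v 0) (v 1 * f 1) ≤ ∑ q, Z.wt q *
      (v (priceIdx v (Z.sig q)) * G v (Z.sig q) (priceIdx v (Z.sig q))) :=
    max_le step3 step4
  rw [key]
  linarith [step1, step2.le, step2.ge]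

lemma smf_integrableOn (f : Fin 2 → ℝ) (Z : Scheme 2 f) :
    IntegrableOn (smf v f Z) (Set.Ioc (0:ℝ) 1) := by
  have heq : smf v f Z = fun x => ∑ i : Fin 2,
      (Set.Ioc (∑ j ∈ Finset.univ.filter (fun j => j < i), f j)
        (∑ j ∈ Finset.univ.filter (fun j => j ≤ i), f j)).indicator
        (fun _ => csZ v f Z i) x := by
    funext x
    unfold smf
    apply Finset.sum_congr rfl
    intro i _
    simp [Set.indicator_apply, Set.mem_Ioc]
  rw [heq]
  apply integrable_finset_sum
  intro i _
  apply Integrable.indicator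
  · refine (integrableOn_const_iff (C := csZ v f Z i)).mpr (Or.inr ?_)
    exact measure_Ioc_lt_top
  · exact measurableSet_Ioc

lemma PF_mono (g g' : ℝ → ℝ) (h0 : ∀ x, 0 ≤ g' x) (hle : ∀ x, g' x ≤ g x)
    (hg : IntegrableOn g (Set.Ioc 0 1)) (hg' : IntegrableOn g' (Set.Ioc 0 1))
    (m : ℝ) (_hm : 0 < m) (hm1 : m ≤ 1) : PF g' m ≤ PF g m := by
  have hbdd : BddBelow {r : ℝ | ∃ T : Set ℝ, T ⊆ Set.Ioc 0 1 ∧ MeasurableSet T ∧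
      volume T = ENNReal.ofReal m ∧ r = ∫ x in T, g' x} := by
    refine ⟨0, ?_⟩
    rintro r ⟨T, hT1, hT2, hT3, rfl⟩
    exact setIntegral_nonneg hT2 (fun x _ => h0 x)
  have hne : {r : ℝ | ∃ T : Set ℝ, T ⊆ Set.Ioc 0 1 ∧ MeasurableSet T ∧
      volume T = ENNReal.ofReal m ∧ r = ∫ x in T, g x}.Nonempty := by
    refine ⟨∫ x in Set.Ioc 0 m, g x, Set.Ioc 0 m, Set.Ioc_subset_Ioc_right hm1,
      measurableSet_Ioc, ?_, rfl⟩
    rw [Real.volume_Ioc, sub_zero]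
  unfold PF
  apply le_csInf hne
  rintro r ⟨T, hT1, hT2, hT3, rfl⟩
  refine le_trans (csInf_le hbdd ⟨T, hT1, hT2, hT3, rfl⟩) ?_
  exact setIntegral_mono_on (hg'.mono_set hT1) (hg.mono_set hT1) hT2
    (fun x _ => hle x)

lemma key_reduction (f : Fin 2 → ℝ) (hv : StrictMono v) (hf : ∀ i, 0 < f i)
    (Z : Scheme 2 f)
    (hbest : ∀ Z' : Scheme 2 f, csZ v f Z' 1 ≤ csZ v f Z 1) :
    ∀ Z' : Scheme 2 f, ∀ m : ℝ, 0 < m → m ≤ 1 →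
      PF (smf v f Z') m ≤ PF (smf v f Z) m := by
  intro Z' m hm hm1
  have hcs : ∀ i, csZ v f Z' i ≤ csZ v f Z i := by
    intro i
    rcases fin2_cases i with h | h <;> rw [h]
    · rw [csZ_zero v f hv Z', csZ_zero v f hv Z]
    · exact hbest Z'
  apply PF_mono
  · intro x
    unfold smf
    apply Finset.sum_nonneg
    intro i _
    split
    · exact csZ_nonneg v f hf Z' i
    · exact le_rfl
  · intro x
    unfold smf
    apply Finset.sum_le_sum
    intro i _
    split
    · exact hcs i
    · exact le_rfl
  · exact smf_integrableOn v f Z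
  · exact smf_integrableOn v f Z'
  · exact hm
  · exact hm1

lemma csZ_oneQ (f : Fin 2 → ℝ) (s : Fin 1 → Fin 2 → ℝ) (w : Fin 1 → ℝ)
    (h1 : ∀ q, IsSignal (s q)) (h2 : ∀ q, 0 ≤ w q) (h3 : ∑ q, w q = 1)
    (h4 : ∀ i, ∑ q, w q * s q i = f i) (i : Fin 2) :
    csZ v f ⟨1, s, w, h1, h2, h3, h4⟩ i = cs v (s 0) i * (w 0 * s 0 i / f i) := by
  unfold csZ
  exact Fin.sum_univ_one _

lemma csZ_twoQ (f : Fin 2 → ℝ) (s : Fin 2 → Fin 2 → ℝ) (w : Fin 2 → ℝ)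
    (h1 : ∀ q, IsSignal (s q)) (h2 : ∀ q, 0 ≤ w q) (h3 : ∑ q, w q = 1)
    (h4 : ∀ i, ∑ q, w q * s q i = f i) (i : Fin 2) :
    csZ v f ⟨2, s, w, h1, h2, h3, h4⟩ i
      = cs v (s 0) i * (w 0 * s 0 i / f i) + cs v (s 1) i * (w 1 * s 1 i / f i) := by
  unfold csZ
  exact Fin.sum_univ_two _

end Aux


theorem stmt19 (v f : Fin 2 → ℝ)
    (hv : StrictMono v) (hvpos : ∀ i, 0 < v i)
    (hf : ∀ i, 0 < f i) (hsum : ∑ i, f i = 1) :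
    ∃ Z : Scheme 2 f, ∀ Z' : Scheme 2 f, ∀ m : ℝ, 0 < m → m ≤ 1 →
      PF (smf v f Z') m ≤ PF (smf v f Z) m := by
  have hf1 : (0:ℝ) < f 1 := hf 1
  have hf1' : f 1 ≠ 0 := hf1.ne'
  have hsum2 : f 0 + f 1 = 1 := by rw [← Fin.sum_univ_two f]; exact hsum
  have hv01 : v 0 < v 1 := hv (show (0:Fin 2) < 1 by decide)
  have hv1 : (0:ℝ) < v 1 := hvpos 1
  by_cases hcase : v 1 * f 1 ≤ v 0
  · -- full pooling is optimal
    refine ⟨⟨1, fun _ => f, fun _ => 1, fun _ => ⟨fun i => (hf i).le, hsum⟩,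
      fun _ => zero_le_one, by simp, fun i => by simp⟩, ?_⟩
    apply key_reduction v f hv hf
    intro Z'
    have hp : priceIdx v f = 0 := by
      apply priceIdx_eq_zero
      intro j
      rcases fin2_cases j with h | h
      · exact le_of_eq (by rw [h])
      · rw [h, G_one v hv f, G_zero v hv f, hsum2, mul_one]
        exact hcase
    refine le_of_le_of_eq ?_ (csZ_oneQ v f (fun _ => f) (fun _ => 1) _ _ _ _ 1).symm
    beta_reduce
    rw [cs_one v hv, hp, one_mul, div_self hf1', mul_one]
    have hb := csZ_one_le v f hv hvpos hf Z'
    rw [max_eq_left hcase] at hb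
    have h2 : csZ v f Z' 1 * f 1 ≤ (v 1 - v 0) * f 1 := by nlinarith
    exact le_of_mul_le_mul_right h2 hf1
  · -- equal-revenue signal plus point mass on v 1
    push_neg at hcase
    have hd : (0:ℝ) < v 1 - v 0 := by linarith
    have hd' : v 1 - v 0 ≠ 0 := hd.ne'
    set γ : ℝ := f 0 * v 1 / (v 1 - v 0) with hγ
    have hγpos : 0 < γ := div_pos (mul_pos (hf 0) hv1) hd
    have hγle : γ ≤ 1 := by
      rw [hγ, div_le_one hd]
      nlinarith
    have hr0 : (0:ℝ) ≤ v 0 / v 1 := (div_pos (hvpos 0) hv1).le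
    have hr1 : v 0 / v 1 ≤ 1 := by rw [div_le_one hv1]; exact hv01.le
    have hA0 : (![1 - v 0 / v 1, v 0 / v 1] : Fin 2 → ℝ) 0 = 1 - v 0 / v 1 := rfl
    have hA1 : (![1 - v 0 / v 1, v 0 / v 1] : Fin 2 → ℝ) 1 = v 0 / v 1 := rfl
    have hB0 : (![(0:ℝ), 1] : Fin 2 → ℝ) 0 = 0 := rfl
    have hB1 : (![(0:ℝ), 1] : Fin 2 → ℝ) 1 = 1 := rfl
    have hSA : IsSignal (![1 - v 0 / v 1, v 0 / v 1] : Fin 2 → ℝ) := by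
      constructor
      · intro i
        rcases fin2_cases i with h | h <;> rw [h]
        · rw [hA0]; linarith
        · rw [hA1]; exact hr0
      · rw [Fin.sum_univ_two, hA0, hA1]; ring
    have hSB : IsSignal (![(0:ℝ), 1] : Fin 2 → ℝ) := by
      constructor
      · intro i
        rcases fin2_cases i with h | h <;> rw [h]
        · rw [hB0]
        · rw [hB1]; exact zero_le_one
      · rw [Fin.sum_univ_two, hB0, hB1, zero_add]
    have hsig : ∀ q : Fin 2, IsSignal
        ((![![1 - v 0 / v 1, v 0 / v 1], ![0, 1]] : Fin 2 → Fin 2 → ℝ) q) := by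
      intro q
      rcases fin2_cases q with h | h <;> rw [h]
      · exact hSA
      · exact hSB
    have hwt : ∀ q : Fin 2, 0 ≤ (![γ, 1 - γ] : Fin 2 → ℝ) q := by
      intro q
      rcases fin2_cases q with h | h <;> rw [h]
      · exact hγpos.le
      · show (0:ℝ) ≤ 1 - γ; linarith
    have hwtsum : ∑ q, (![γ, 1 - γ] : Fin 2 → ℝ) q = 1 := by
      rw [Fin.sum_univ_two]; show γ + (1 - γ) = 1; ring
    have hbayes : ∀ i, ∑ q, (![γ, 1 - γ] : Fin 2 → ℝ) q *
        (![![1 - v 0 / v 1, v 0 / v 1], ![0, 1]] : Fin 2 → Fin 2 → ℝ) q i = f i := by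
      intro i
      rw [Fin.sum_univ_two]
      rcases fin2_cases i with h | h <;> rw [h]
      · show γ * (1 - v 0 / v 1) + (1 - γ) * 0 = f 0
        rw [hγ]
        field_simp
        ring
      · show γ * (v 0 / v 1) + (1 - γ) * 1 = f 1
        have hf0 : f 0 = 1 - f 1 := by linarith
        rw [hγ, hf0]
        field_simp
        ring
    refine ⟨⟨2, ![![1 - v 0 / v 1, v 0 / v 1], ![0, 1]], ![γ, 1 - γ],
      hsig, hwt, hwtsum, hbayes⟩, ?_⟩
    apply key_reduction v f hv hf
    intro Z'
    have hGA0 : G v ![1 - v 0 / v 1, v 0 / v 1] 0 = 1 := by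
      rw [G_zero v hv, hA0, hA1]; ring
    have hGA1 : G v ![1 - v 0 / v 1, v 0 / v 1] 1 = v 0 / v 1 := by
      rw [G_one v hv, hA1]
    have hpA : priceIdx v ![1 - v 0 / v 1, v 0 / v 1] = 0 := by
      apply priceIdx_eq_zero
      intro j
      rcases fin2_cases j with h | h
      · exact le_of_eq (by rw [h])
      · rw [h, hGA1, hGA0, mul_one]
        exact le_of_eq (by field_simp)
    have hpB : priceIdx v ![(0:ℝ), 1] = 1 := by
      apply priceIdx_eq_one
      rw [G_zero v hv, G_one v hv, hB0, hB1, not_le, zero_add, mul_one, mul_one]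
      exact hv01
    rw [csZ_twoQ]
    simp only [Matrix.cons_val_zero, Matrix.cons_val_one, Matrix.head_cons]
    rw [cs_one v hv, cs_one v hv, hpA, hpB]
    have hRHS : (v 1 - v 0) * (γ * (v 0 / v 1) / f 1)
        + (v 1 - v 1) * ((1 - γ) * 1 / f 1)
        = f 0 * v 0 / f 1 := by
      rw [hγ]
      field_simp
      ring
    rw [hRHS]
    rw [le_div_iff₀ hf1]
    have hb := csZ_one_le v f hv hvpos hf Z'
    rw [max_eq_right hcase.le] at hb
    linarith

end PD
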